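/- There is an absolute constant C > 0 with the following property. Let G be an abelian group, A ⊆ G a finite set with dim(A) ≥ 4, k = ⌈dim(A)·log dim(A)⌉, Λ_k a maximal k-dissociated subset of A (so |Λ_k| = dim_k(A)), and K ≥ 1 a real number. Then: (i) if dim(Q(Λ_k)) ≤ K·dim(A), then dim_k(A) ≤ C·K·dim(A)/log dim(A); and (ii) if dim_k(A) ≤ K·dim(A)/log dim(A), then dim(Q(Λ_k)) ≤ C·K·dim(A). -/

import Mathlib

open Finset Pointwise

universe u

/-- A finset `Λ` in an abelian group is `k`-dissociated if every integer relation
`∑ ε_λ • λ = 0` with `|ε_λ| ≤ k` forces all `ε_λ = 0`. -/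
def IsKDissociated {G : Type*} [AddCommGroup G] (k : ℕ) (Λ : Finset G) : Prop :=
  ∀ ε : G → ℤ, (∀ x ∈ Λ, |ε x| ≤ (k : ℤ)) → (∑ x ∈ Λ, ε x • x) = 0 → ∀ x ∈ Λ, ε x = 0

/-- `addDim k A` is the maximal size of a `k`-dissociated subset of `A`. -/
noncomputable def addDim {G : Type*} [AddCommGroup G] (k : ℕ) (A : Finset G) : ℕ :=
  sSup {n : ℕ | ∃ Λ : Finset G, Λ ⊆ A ∧ Λ.card = n ∧ IsKDissociated k Λ}

/-- `nFold A n` is the `n`-fold sumset `A + A + ⋯ + A` (`n` summands). -/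
def nFold {G : Type*} [AddCommGroup G] [DecidableEq G] (A : Finset G) : ℕ → Finset G
  | 0 => {0}
  | n + 1 => nFold A n + A

/-- The combinatorial cube `Q(Λ) = {∑_{x ∈ S} x : S ⊆ Λ}`, i.e. all `{0,1}`-combinations. -/
def cube {G : Type*} [AddCommGroup G] [DecidableEq G] (Λ : Finset G) : Finset G :=
  Λ.powerset.image (fun S => ∑ x ∈ S, x)



open Finset Pointwise
open scoped symmDiff


lemma cb_sq (m : ℕ) : (Nat.centralBinom m)^2 * (2*m+1) ≤ 16^m := by
  induction m with
  | zero => simp [Nat.centralBinom]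
  | succ m ih =>
    have h := Nat.succ_mul_centralBinom_succ m
    have hpos : 0 < (m+1)^2 := by positivity
    have key : (m+1)^2 * ((Nat.centralBinom (m+1))^2 * (2*(m+1)+1)) ≤ (m+1)^2 * 16^(m+1) := by
      have h2 : ((m+1) * Nat.centralBinom (m+1))^2 = (2*(2*m+1))^2 * (Nat.centralBinom m)^2 := by
        rw [h]; ring
      have h3 : (m+1)^2 * ((Nat.centralBinom (m+1))^2 * (2*(m+1)+1))
          = (2*(2*m+1))^2 * (Nat.centralBinom m)^2 * (2*m+3) := by
        rw [← h2]; ring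
      rw [h3]
      have h4 : (2*(2*m+1))^2 * (Nat.centralBinom m)^2 * (2*m+3)
          = ((Nat.centralBinom m)^2 * (2*m+1)) * (4*(2*m+1)*(2*m+3)) := by ring
      rw [h4]
      calc ((Nat.centralBinom m)^2 * (2*m+1)) * (4*(2*m+1)*(2*m+3))
          ≤ 16^m * (4*(2*m+1)*(2*m+3)) := Nat.mul_le_mul_right _ ih
        _ ≤ 16^m * ((m+1)^2 * 16) := by
            apply Nat.mul_le_mul_left
            nlinarith
        _ = (m+1)^2 * 16^(m+1) := by ring
    exact Nat.le_of_mul_le_mul_left key hpos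

lemma choose_half_sq (s : ℕ) : (s.choose (s/2))^2 * (s+1) ≤ 4^s := by
  rcases Nat.even_or_odd s with ⟨m, hm⟩ | ⟨m, hm⟩
  · subst hm
    have : (m+m)/2 = m := by omega
    rw [this]
    have : (m+m).choose m = Nat.centralBinom m := by
      rw [Nat.centralBinom]; congr 1; omega
    rw [this]
    calc (Nat.centralBinom m)^2 * (m+m+1) = (Nat.centralBinom m)^2 * (2*m+1) := by ring_nf
      _ ≤ 16^m := cb_sq m
      _ ≤ 4^(m+m) := by rw [show (16:ℕ) = 4^2 by norm_num, ← pow_mul]; exact Nat.pow_le_pow_right (by norm_num) (by omega)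
  · subst hm
    have h2 : (2*m+1)/2 = m := by omega
    rw [h2]
    -- (m+1) * C(2m+1, m+1) = (2m+1) * C(2m, m)
    have hid := Nat.add_one_mul_choose_eq (2*m) m
    -- Nat.succ_mul_choose_eq : succ n * n.choose k = (n+1).choose (k+1) * (k+1)
    have hsymm : (2*m+1).choose (m+1) = (2*m+1).choose m := by
      rw [← Nat.choose_symm (by omega)]
      congr 1; omega
    have hid2 : (2*m+1) * Nat.centralBinom m = (2*m+1).choose m * (m+1) := by
      rw [← hsymm, Nat.centralBinom]
      simpa [Nat.succ_eq_add_one] using hid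
    have key : ((2*m+1).choose m)^2 * (2*m+1+1) * (m+1)^2 ≤ 4^(2*m+1) * (m+1)^2 := by
      have e1 : ((2*m+1).choose m)^2 * (2*m+1+1) * (m+1)^2
          = ((2*m+1) * Nat.centralBinom m)^2 * (2*m+2) := by rw [hid2]; ring
      rw [e1]
      have e2 : ((2*m+1) * Nat.centralBinom m)^2 * (2*m+2)
          = ((Nat.centralBinom m)^2 * (2*m+1)) * ((2*m+1) * (2*m+2)) := by ring
      rw [e2]
      calc ((Nat.centralBinom m)^2 * (2*m+1)) * ((2*m+1) * (2*m+2))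
          ≤ 16^m * ((2*m+1)*(2*m+2)) := Nat.mul_le_mul_right _ (cb_sq m)
        _ ≤ 16^m * (4 * (m+1)^2) := by apply Nat.mul_le_mul_left; nlinarith
        _ = (16^m * 4) * (m+1)^2 := by ring
        _ = 4^(2*m+1) * (m+1)^2 := by
            congr 1
            rw [show (16:ℕ) = 4^2 by norm_num, ← pow_mul, ← pow_succ]
    have := Nat.le_of_mul_le_mul_right key (by positivity : 0 < (m+1)^2)
    exact this



lemma countZ (N : ℕ) (ε : Fin N → ℤ) (hε : ∀ i, ε i = -1 ∨ ε i = 0 ∨ ε i = 1) :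
    (Finset.univ.filter fun T : Finset (Fin N) => ∑ i ∈ T, ε i = 0).card
      ≤ ((Finset.univ.filter fun i => ε i ≠ 0).card.choose
          ((Finset.univ.filter fun i => ε i ≠ 0).card / 2))
        * 2 ^ (N - (Finset.univ.filter fun i => ε i ≠ 0).card) := by
  set S := Finset.univ.filter fun i => ε i ≠ 0 with hS
  set Q := Finset.univ.filter fun i => ε i = -1 with hQ
  set s := S.card
  set q := Q.card
  -- key identity
  have key : ∀ T : Finset (Fin N), (((T ∆ Q) ∩ S).card : ℤ) = (∑ i ∈ T, ε i) + q := by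
    intro T
    have c1 : (((T ∆ Q) ∩ S).card : ℤ)
        = ∑ i : Fin N, (if i ∈ (T ∆ Q) ∩ S then (1:ℤ) else 0) := by
      rw [Finset.sum_ite_mem, Finset.univ_inter, Finset.card_eq_sum_ones]
      push_cast; ring
    have c2 : (q : ℤ) = ∑ i : Fin N, (if i ∈ Q then (1:ℤ) else 0) := by
      rw [Finset.sum_ite_mem, Finset.univ_inter]
      simp [q]
    have c3 : (∑ i ∈ T, ε i) = ∑ i : Fin N, (if i ∈ T then ε i else 0) := by
      rw [Finset.sum_ite_mem, Finset.univ_inter]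
    rw [c1, c2, c3, ← Finset.sum_add_distrib]
    apply Finset.sum_congr rfl
    intro i _
    have hiQ : i ∈ Q ↔ ε i = -1 := by simp [hQ]
    have hiS : i ∈ S ↔ ε i ≠ 0 := by simp [hS]
    have hiTQ : i ∈ T ∆ Q ↔ (i ∈ T ∧ i ∉ Q) ∨ (i ∈ Q ∧ i ∉ T) := by
      rw [Finset.mem_symmDiff]
    rcases hε i with h | h | h <;> by_cases hT : i ∈ T <;>
      simp_all [Finset.mem_inter, hiTQ, hiS, hiQ]
  -- step 1 : map to W
  set W := Finset.univ.filter fun U : Finset (Fin N) => (U ∩ S).card = q with hW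
  have step1 : (Finset.univ.filter fun T : Finset (Fin N) => ∑ i ∈ T, ε i = 0).card ≤ W.card := by
    apply Finset.card_le_card_of_injOn (fun T => T ∆ Q)
    · intro T hT
      simp only [Finset.mem_coe, Finset.mem_filter, Finset.mem_univ, true_and] at hT
      simp only [Finset.mem_coe, hW, Finset.mem_filter, Finset.mem_univ, true_and]
      have h2 := key T
      rw [hT] at h2
      have h3 : (((T ∆ Q) ∩ S).card : ℤ) = (q : ℤ) := by rw [h2]; ring
      exact_mod_cast h3
    · intro a _ b _ hab
      have hab' : a ∆ Q = b ∆ Q := hab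
      have : a ∆ Q ∆ Q = b ∆ Q ∆ Q := by rw [hab']
      simpa [symmDiff_symmDiff_cancel_right] using this
  -- step 2 : count W
  have step2 : W.card ≤ s.choose q * 2 ^ (N - s) := by
    have : W.card ≤ ((Finset.powersetCard q S) ×ˢ (Finset.univ \ S).powerset).card := by
      apply Finset.card_le_card_of_injOn (fun U => (U ∩ S, U \ S))
      · intro U hU
        simp only [Finset.mem_coe, hW, Finset.mem_filter, Finset.mem_univ, true_and] at hU
        rw [Finset.mem_coe, Finset.mem_product, Finset.mem_powersetCard, Finset.mem_powerset]
        refine ⟨⟨Finset.inter_subset_right, hU⟩, ?_⟩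
        intro x hx
        simp only [Finset.mem_sdiff, Finset.mem_univ, true_and]
        exact (Finset.mem_sdiff.mp hx).2
      · intro a _ b _ hab
        simp only [Prod.mk.injEq] at hab
        have ha : a = (a ∩ S) ∪ (a \ S) := by
          ext x; simp only [Finset.mem_union, Finset.mem_inter, Finset.mem_sdiff]; tauto
        have hb : b = (b ∩ S) ∪ (b \ S) := by
          ext x; simp only [Finset.mem_union, Finset.mem_inter, Finset.mem_sdiff]; tauto
        rw [ha, hb, hab.1, hab.2]
    calc W.card ≤ _ := this
      _ = s.choose q * 2 ^ (N - s) := by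
          rw [Finset.card_product, Finset.card_powersetCard, Finset.card_powerset,
            Finset.card_sdiff_of_subset (Finset.subset_univ S)]
          simp [s]
  calc (Finset.univ.filter fun T : Finset (Fin N) => ∑ i ∈ T, ε i = 0).card
      ≤ W.card := step1
    _ ≤ s.choose q * 2 ^ (N - s) := step2
    _ ≤ s.choose (s/2) * 2 ^ (N - s) :=
        Nat.mul_le_mul_right _ (Nat.choose_le_middle q s)


lemma two_mul_le_two_pow {N : ℕ} (h : 2 ≤ N) : 2 * N ≤ 2 ^ N := by
  induction N with
  | zero => omega
  | succ n ih =>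
    rcases Nat.lt_or_ge n 2 with h2 | h2
    · interval_cases n <;> simp_all
    · have := ih h2
      have h1 : (1:ℕ) ≤ 2^n := Nat.one_le_two_pow
      rw [pow_succ]; omega

lemma choose_le_two_pow (N s : ℕ) : N.choose s ≤ 2 ^ N := by
  rcases le_or_gt s N with h | h
  · calc N.choose s ≤ ∑ i ∈ Finset.range (N+1), N.choose i :=
        Finset.single_le_sum (fun i _ => Nat.zero_le _) (Finset.mem_range.mpr (by omega))
      _ = 2 ^ N := Nat.sum_range_choose N
  · rw [Nat.choose_eq_zero_of_lt h]; exact Nat.zero_le _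

lemma two_t_add_one_le {t : ℕ} (h : 3 ≤ t) : 2 * t + 1 ≤ 2 ^ t := by
  induction t with
  | zero => omega
  | succ n ih =>
    rcases Nat.lt_or_ge n 3 with h2 | h2
    · interval_cases n <;> simp_all
    · have := ih h2
      rw [pow_succ]; omega

lemma key_ineq {m ℓ N s : ℕ} (hℓ : ℓ = Nat.log 2 m) (hm : 2 ^ 40 ≤ m)
    (hN : N = m * ℓ / 64) (hs1 : 1 ≤ s) (hsN : s ≤ N) :
    (2 * N * N.choose s * 2 ^ s) ^ 2 ≤ (s + 1) ^ m := by
  have hm0 : m ≠ 0 := by positivity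
  have hℓ40 : 40 ≤ ℓ := by
    rw [hℓ, show (40:ℕ) = Nat.log 2 (2^40) from (Nat.log_pow (by norm_num) 40).symm]
    exact Nat.log_mono_right hm
  have hm2ℓ : 2 ^ ℓ ≤ m := hℓ ▸ Nat.pow_log_le_self 2 hm0
  have hmlt : m < 2 ^ (ℓ + 1) := hℓ ▸ Nat.lt_pow_succ_log_self (by norm_num) m
  have h64N : 64 * N ≤ m * ℓ := by
    rw [hN, Nat.mul_comm]
    exact Nat.div_mul_le_self (m * ℓ) 64
  have hN2 : 2 ≤ N := by
    rw [hN, Nat.le_div_iff_mul_le (by norm_num)]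
    calc 2 * 64 = 128 := by norm_num
      _ ≤ 2 ^ 40 * 40 := by norm_num
      _ ≤ m * ℓ := Nat.mul_le_mul hm hℓ40
  set r := ℓ / 8 with hr
  rcases le_or_gt (2 ^ r) (s + 1) with hc | hc
  -- Case A : s large
  · have ha : 2 * N * N.choose s * 2 ^ s ≤ 2 ^ (3 * N) := by
      calc 2 * N * N.choose s * 2 ^ s ≤ 2 ^ N * N.choose s * 2 ^ s := by
            have := two_mul_le_two_pow hN2
            exact Nat.mul_le_mul_right _ (Nat.mul_le_mul_right _ this)
        _ ≤ 2 ^ N * 2 ^ N * 2 ^ N := by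
            apply Nat.mul_le_mul
            exact Nat.mul_le_mul_left _ (choose_le_two_pow N s)
            exact Nat.pow_le_pow_right (by norm_num) hsN
        _ = 2 ^ (3 * N) := by rw [← pow_add, ← pow_add]; ring_nf
    have h6N : 6 * N ≤ r * m := by
      have hu5 : 5 ≤ r := by omega
      have hℓu : ℓ ≤ 8 * r + 7 := by omega
      have step : 64 * (6 * N) ≤ 64 * (r * m) := by
        calc 64 * (6 * N) = 6 * (64 * N) := by ring
          _ ≤ 6 * (m * ℓ) := Nat.mul_le_mul_left _ h64N
          _ ≤ 6 * (m * (8 * r + 7)) := Nat.mul_le_mul_left _ (Nat.mul_le_mul_left _ hℓu)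
          _ = 48 * (m * r) + 42 * m := by ring
          _ ≤ 48 * (m * r) + 16 * (m * r) := by
              have : 42 * m ≤ 16 * (m * r) := by
                calc 42 * m ≤ 16 * (m * 5) := by omega
                  _ ≤ 16 * (m * r) := by
                    exact Nat.mul_le_mul_left _ (Nat.mul_le_mul_left _ hu5)
              omega
          _ = 64 * (r * m) := by ring
      exact Nat.le_of_mul_le_mul_left step (by norm_num)
    calc (2 * N * N.choose s * 2 ^ s) ^ 2 ≤ (2 ^ (3 * N)) ^ 2 :=
        Nat.pow_le_pow_left ha 2
      _ = 2 ^ (6 * N) := by rw [← pow_mul]; ring_nf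
      _ ≤ 2 ^ (r * m) := Nat.pow_le_pow_right (by norm_num) h6N
      _ = (2 ^ r) ^ m := by rw [← pow_mul]
      _ ≤ (s + 1) ^ m := Nat.pow_le_pow_left hc m
  -- Case B : s small
  · have hNm : 2 * N ≤ m ^ 3 := by
      have h1 : N ≤ m * ℓ := by omega
      have h2 : ℓ ≤ m := hℓ ▸ Nat.log_le_self 2 m
      have h3 : N ≤ m * m := le_trans h1 (Nat.mul_le_mul_left _ h2)
      have hm2 : 2 ≤ m := by omega
      calc 2 * N ≤ 2 * (m * m) := Nat.mul_le_mul_left _ h3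
        _ ≤ m * (m * m) := Nat.mul_le_mul_right _ hm2
        _ = m ^ 3 := by ring
    have ha : 2 * N * N.choose s * 2 ^ s ≤ (2 * N) ^ (3 * s) := by
      have h1 : N.choose s ≤ N ^ s := Nat.choose_le_pow N s
      calc 2 * N * N.choose s * 2 ^ s ≤ 2 * N * N ^ s * 2 ^ s := by
            exact Nat.mul_le_mul_right _ (Nat.mul_le_mul_left _ h1)
        _ ≤ (2 * N) * (2 * N) ^ s * (2 * N) ^ s := by
            apply Nat.mul_le_mul
            apply Nat.mul_le_mul_left
            exact Nat.pow_le_pow_left (by omega) s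
            exact Nat.pow_le_pow_left (by omega) s
        _ = (2 * N) ^ (2 * s + 1) := by rw [mul_assoc, ← pow_add, pow_succ']; ring_nf
        _ ≤ (2 * N) ^ (3 * s) := Nat.pow_le_pow_right (by omega) (by omega)
    have hsℓm : 36 * s * ℓ ≤ m := by
      have hs2r : s ≤ 2 ^ r := by omega
      have hℓpow : ℓ ≤ 2 ^ (ℓ / 2) := by
        have h3 : 3 ≤ ℓ / 2 := by omega
        have := two_t_add_one_le h3
        omega
      calc 36 * s * ℓ ≤ 36 * 2 ^ r * 2 ^ (ℓ / 2) := by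
            apply Nat.mul_le_mul (Nat.mul_le_mul_left _ hs2r) hℓpow
        _ ≤ 2 ^ 6 * 2 ^ r * 2 ^ (ℓ / 2) := by norm_num
        _ = 2 ^ (6 + r + ℓ / 2) := by rw [← pow_add, ← pow_add]
        _ ≤ 2 ^ ℓ := Nat.pow_le_pow_right (by norm_num) (by omega)
        _ ≤ m := hm2ℓ
    calc (2 * N * N.choose s * 2 ^ s) ^ 2 ≤ ((2 * N) ^ (3 * s)) ^ 2 :=
        Nat.pow_le_pow_left ha 2
      _ = (2 * N) ^ (6 * s) := by rw [← pow_mul]; ring_nf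
      _ ≤ (m ^ 3) ^ (6 * s) := Nat.pow_le_pow_left hNm _
      _ = m ^ (18 * s) := by rw [← pow_mul]; ring_nf
      _ ≤ (2 ^ (ℓ + 1)) ^ (18 * s) := Nat.pow_le_pow_left (by omega) _
      _ = 2 ^ ((ℓ + 1) * (18 * s)) := by rw [← pow_mul]
      _ ≤ 2 ^ (36 * s * ℓ) := by
          apply Nat.pow_le_pow_right (by norm_num)
          have : 1 ≤ ℓ := by omega
          nlinarith
      _ ≤ 2 ^ m := Nat.pow_le_pow_right (by norm_num) hsℓm
      _ ≤ (s + 1) ^ m := Nat.pow_le_pow_left (by omega) m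



lemma exists_dissociated_vectors (m : ℕ) (hm : 2 ^ 40 ≤ m) :
    ∃ v : Fin (m * Nat.log 2 m / 64) → Fin m → ℤ,
      (∀ i j, v i j = 0 ∨ v i j = 1) ∧
      ∀ ε : Fin (m * Nat.log 2 m / 64) → ℤ, (∀ i, |ε i| ≤ 1) →
        (∀ j, ∑ i, ε i * v i j = 0) → ∀ i, ε i = 0 := by
  classical
  set ℓ := Nat.log 2 m with hℓ
  set N := m * ℓ / 64 with hN
  have hN1 : 1 ≤ N := by
    rw [hN, Nat.le_div_iff_mul_le (by norm_num)]
    have hℓ40 : 40 ≤ ℓ := by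
      rw [hℓ, show (40:ℕ) = Nat.log 2 (2^40) from (Nat.log_pow (by norm_num) 40).symm]
      exact Nat.log_mono_right hm
    calc 1 * 64 = 64 := by norm_num
      _ ≤ 2 ^ 40 * 40 := by norm_num
      _ ≤ m * ℓ := Nat.mul_le_mul hm hℓ40
  -- the sign vectors
  set E : Finset (Fin N → ℤ) := Fintype.piFinset (fun _ => ({-1, 0, 1} : Finset ℤ)) with hE
  set E' : Finset (Fin N → ℤ) := E.filter (fun ε => ∃ i, ε i ≠ 0) with hE'
  set sfun : (Fin N → ℤ) → ℕ := fun ε => (Finset.univ.filter fun i => ε i ≠ 0).card with hsfun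
  set Bad : Finset (Fin m → Finset (Fin N)) :=
    Finset.univ.filter (fun ω => ∃ ε ∈ E', ∀ j, ∑ i ∈ ω j, ε i = 0) with hBad
  have hrange : ∀ ε ∈ E, ∀ i, ε i = -1 ∨ ε i = 0 ∨ ε i = 1 := by
    intro ε hε i
    rw [hE, Fintype.mem_piFinset] at hε
    have := hε i
    simp only [Finset.mem_insert, Finset.mem_singleton] at this
    tauto
  -- counting Bad
  have hBadCard : Bad.card ≤ ∑ s ∈ Finset.Icc 1 N,
      N.choose s * 2 ^ s * ((s.choose (s/2)) * 2 ^ (N - s)) ^ m := by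
    have h1 : Bad ⊆ E'.biUnion (fun ε =>
        Finset.univ.filter (fun ω : Fin m → Finset (Fin N) => ∀ j, ∑ i ∈ ω j, ε i = 0)) := by
      intro ω hω
      rw [hBad, Finset.mem_filter] at hω
      obtain ⟨-, ε, hε, hωε⟩ := hω
      exact Finset.mem_biUnion.mpr ⟨ε, hε, Finset.mem_filter.mpr ⟨Finset.mem_univ _, hωε⟩⟩
    have h2 : ∀ ε : Fin N → ℤ,
        (Finset.univ.filter (fun ω : Fin m → Finset (Fin N) => ∀ j, ∑ i ∈ ω j, ε i = 0)).card
        = ((Finset.univ.filter fun T : Finset (Fin N) => ∑ i ∈ T, ε i = 0)).card ^ m := by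
      intro ε
      have : Finset.univ.filter (fun ω : Fin m → Finset (Fin N) => ∀ j, ∑ i ∈ ω j, ε i = 0)
          = Fintype.piFinset (fun _ : Fin m =>
              Finset.univ.filter fun T : Finset (Fin N) => ∑ i ∈ T, ε i = 0) := by
        ext ω
        simp [Fintype.mem_piFinset]
      rw [this, Fintype.card_piFinset]
      simp
    calc Bad.card ≤ (E'.biUnion _).card := Finset.card_le_card h1
      _ ≤ ∑ ε ∈ E', (Finset.univ.filter
            (fun ω : Fin m → Finset (Fin N) => ∀ j, ∑ i ∈ ω j, ε i = 0)).card :=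
          Finset.card_biUnion_le
      _ ≤ ∑ ε ∈ E', ((sfun ε).choose (sfun ε / 2) * 2 ^ (N - sfun ε)) ^ m := by
          apply Finset.sum_le_sum
          intro ε hε
          rw [h2 ε]
          apply Nat.pow_le_pow_left
          exact countZ N ε (hrange ε (Finset.mem_filter.mp hε).1)
      _ = ∑ s ∈ Finset.Icc 1 N, ∑ ε ∈ E'.filter (fun ε => sfun ε = s),
            ((sfun ε).choose (sfun ε / 2) * 2 ^ (N - sfun ε)) ^ m := by
          rw [Finset.sum_fiberwise_of_maps_to]
          intro ε hε
          rw [Finset.mem_Icc]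
          constructor
          · rw [hE', Finset.mem_filter] at hε
            obtain ⟨-, i, hi⟩ := hε
            have : i ∈ Finset.univ.filter fun i => ε i ≠ 0 := by simp [hi]
            exact Finset.card_pos.mpr ⟨i, this⟩
          · calc sfun ε ≤ (Finset.univ : Finset (Fin N)).card := Finset.card_filter_le _ _
              _ = N := by simp
      _ ≤ ∑ s ∈ Finset.Icc 1 N,
            N.choose s * 2 ^ s * ((s.choose (s/2)) * 2 ^ (N - s)) ^ m := by
          apply Finset.sum_le_sum
          intro s hs
          have hfibcard : (E'.filter (fun ε => sfun ε = s)).card ≤ N.choose s * 2 ^ s := by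
            have hinj : (E'.filter (fun ε => sfun ε = s)).card ≤
                ((Finset.powersetCard s (Finset.univ : Finset (Fin N))).sigma
                  (fun St => St.powerset)).card := by
              apply Finset.card_le_card_of_injOn
                (fun ε => ⟨Finset.univ.filter (fun i => ε i ≠ 0),
                           Finset.univ.filter (fun i => ε i = -1)⟩)
              · intro ε hε
                rw [Finset.mem_coe, Finset.mem_filter] at hε
                rw [Finset.mem_coe, Finset.mem_sigma, Finset.mem_powersetCard_univ, Finset.mem_powerset]
                refine ⟨hε.2, ?_⟩
                intro i hi
                simp only [Finset.mem_filter, Finset.mem_univ, true_and] at hi ⊢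
                rw [hi]; norm_num
              · intro a ha b hb hab
                simp only [Finset.mem_coe, Finset.mem_filter] at ha hb
                have haE := (Finset.mem_filter.mp ha.1).1
                have hbE := (Finset.mem_filter.mp hb.1).1
                obtain ⟨h1, h2⟩ := Sigma.mk.inj_iff.mp hab
                have h2' := eq_of_heq h2
                funext i
                have hai := hrange a haE i
                have hbi := hrange b hbE i
                have e1 : (i ∈ Finset.univ.filter (fun i => a i ≠ 0))
                    ↔ (i ∈ Finset.univ.filter (fun i => b i ≠ 0)) := by rw [h1]
                have e2 : (i ∈ Finset.univ.filter (fun i => a i = -1))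
                    ↔ (i ∈ Finset.univ.filter (fun i => b i = -1)) := by rw [h2']
                simp only [Finset.mem_filter, Finset.mem_univ, true_and] at e1 e2
                rcases hai with h | h | h <;> rcases hbi with h' | h' | h' <;> omega
            calc (E'.filter (fun ε => sfun ε = s)).card ≤ _ := hinj
              _ = N.choose s * 2 ^ s := by
                  rw [Finset.card_sigma]
                  have : ∀ St ∈ Finset.powersetCard s (Finset.univ : Finset (Fin N)),
                      St.powerset.card = 2 ^ s := by
                    intro St hSt
                    rw [Finset.card_powerset, Finset.mem_powersetCard_univ.mp hSt]
                  rw [Finset.sum_congr rfl this, Finset.sum_const, smul_eq_mul,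
                    Finset.card_powersetCard]
                  simp [mul_comm]
          calc ∑ ε ∈ E'.filter (fun ε => sfun ε = s),
                ((sfun ε).choose (sfun ε / 2) * 2 ^ (N - sfun ε)) ^ m
              = ∑ ε ∈ E'.filter (fun ε => sfun ε = s),
                ((s.choose (s/2)) * 2 ^ (N - s)) ^ m := by
                apply Finset.sum_congr rfl
                intro ε hε
                rw [(Finset.mem_filter.mp hε).2]
            _ = (E'.filter (fun ε => sfun ε = s)).card * ((s.choose (s/2)) * 2 ^ (N - s)) ^ m := by
                rw [Finset.sum_const, smul_eq_mul]
            _ ≤ N.choose s * 2 ^ s * ((s.choose (s/2)) * 2 ^ (N - s)) ^ m :=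
                Nat.mul_le_mul_right _ hfibcard
  -- per-term bound
  have hterm : ∀ s ∈ Finset.Icc 1 N,
      2 * N * (N.choose s * 2 ^ s * ((s.choose (s/2)) * 2 ^ (N - s)) ^ m) ≤ 2 ^ (N * m) := by
    intro s hs
    rw [Finset.mem_Icc] at hs
    obtain ⟨hs1, hsN⟩ := hs
    rw [← Nat.pow_le_pow_iff_left (two_ne_zero)]
    have e1 : (2 * N * (N.choose s * 2 ^ s * ((s.choose (s/2)) * 2 ^ (N - s)) ^ m)) ^ 2
        = (2 * N * N.choose s * 2 ^ s) ^ 2 * (((s.choose (s/2)) ^ 2) ^ m * (2 ^ (N - s)) ^ (2 * m)) := by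
      ring
    rw [e1]
    have e2 : ((2:ℕ) ^ (N * m)) ^ 2 = 2 ^ (2 * N * m) := by rw [← pow_mul]; ring_nf
    rw [e2]
    have h1 : (2 * N * N.choose s * 2 ^ s) ^ 2 ≤ (s + 1) ^ m := key_ineq hℓ hm hN hs1 hsN
    have h2 : (s + 1) ^ m * ((s.choose (s/2)) ^ 2) ^ m ≤ (4 ^ s) ^ m := by
      rw [← mul_pow]
      apply Nat.pow_le_pow_left
      calc (s + 1) * (s.choose (s/2)) ^ 2 = (s.choose (s/2)) ^ 2 * (s + 1) := by ring
        _ ≤ 4 ^ s := choose_half_sq s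
    calc (2 * N * N.choose s * 2 ^ s) ^ 2 * (((s.choose (s/2)) ^ 2) ^ m * (2 ^ (N - s)) ^ (2 * m))
        ≤ (s + 1) ^ m * (((s.choose (s/2)) ^ 2) ^ m * (2 ^ (N - s)) ^ (2 * m)) :=
          Nat.mul_le_mul_right _ h1
      _ = ((s + 1) ^ m * ((s.choose (s/2)) ^ 2) ^ m) * (2 ^ (N - s)) ^ (2 * m) := by ring
      _ ≤ (4 ^ s) ^ m * (2 ^ (N - s)) ^ (2 * m) := Nat.mul_le_mul_right _ h2
      _ = 2 ^ (2 * s * m) * 2 ^ ((N - s) * (2 * m)) := by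
          rw [show (4:ℕ) = 2^2 by norm_num, ← pow_mul, ← pow_mul, ← pow_mul]
          ring_nf
      _ = 2 ^ (2 * s * m + (N - s) * (2 * m)) := by rw [← pow_add]
      _ = 2 ^ (2 * N * m) := by
          congr 1
          have : N - s + s = N := Nat.sub_add_cancel hsN
          nlinarith [Nat.sub_add_cancel hsN]
  -- conclude Bad.card < total
  have hlt : Bad.card < 2 ^ (N * m) := by
    have hsum : 2 * N * Bad.card ≤ N * 2 ^ (N * m) := by
      calc 2 * N * Bad.card
          ≤ 2 * N * ∑ s ∈ Finset.Icc 1 N,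
              N.choose s * 2 ^ s * ((s.choose (s/2)) * 2 ^ (N - s)) ^ m :=
            Nat.mul_le_mul_left _ hBadCard
        _ = ∑ s ∈ Finset.Icc 1 N,
              2 * N * (N.choose s * 2 ^ s * ((s.choose (s/2)) * 2 ^ (N - s)) ^ m) := by
            rw [Finset.mul_sum]
        _ ≤ ∑ s ∈ Finset.Icc 1 N, 2 ^ (N * m) := Finset.sum_le_sum hterm
        _ = (Finset.Icc 1 N).card * 2 ^ (N * m) := by rw [Finset.sum_const, smul_eq_mul]
        _ = N * 2 ^ (N * m) := by rw [Nat.card_Icc]; norm_num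
    by_contra hcon
    push_neg at hcon
    have : 2 * N * 2 ^ (N * m) ≤ 2 * N * Bad.card := Nat.mul_le_mul_left _ hcon
    have h2 : 2 * N * 2 ^ (N * m) ≤ N * 2 ^ (N * m) := le_trans this hsum
    have hp : 0 < 2 ^ (N * m) := by positivity
    nlinarith [hp, hN1]
  -- extract a good ω
  have hcard : (Finset.univ : Finset (Fin m → Finset (Fin N))).card = 2 ^ (N * m) := by
    rw [Finset.card_univ, Fintype.card_fun]
    rw [Fintype.card_finset, Fintype.card_fin, Fintype.card_fin, ← pow_mul]
  have : ∃ ω : Fin m → Finset (Fin N), ω ∉ Bad := by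
    by_contra hcon
    push_neg at hcon
    have hsub : (Finset.univ : Finset (Fin m → Finset (Fin N))) ⊆ Bad :=
      fun ω _ => hcon ω
    have hge := Finset.card_le_card hsub
    omega
  obtain ⟨ω, hω⟩ := this
  refine ⟨fun i j => if i ∈ ω j then 1 else 0, fun i j => by by_cases h : i ∈ ω j <;> simp [h], ?_⟩
  intro ε hεbd hεsum
  by_contra hcon
  push_neg at hcon
  obtain ⟨i0, hi0⟩ := hcon
  apply hω
  rw [hBad, Finset.mem_filter]
  refine ⟨Finset.mem_univ _, ε, ?_, ?_⟩
  · rw [hE', Finset.mem_filter]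
    constructor
    · rw [hE, Fintype.mem_piFinset]
      intro i
      have h := abs_le.mp (hεbd i)
      simp only [Finset.mem_insert, Finset.mem_singleton]
      omega
    · exact ⟨i0, hi0⟩
  · intro j
    have := hεsum j
    calc ∑ i ∈ ω j, ε i = ∑ i : Fin N, (if i ∈ ω j then ε i else 0) := by
          rw [Finset.sum_ite_mem, Finset.univ_inter]
      _ = ∑ i : Fin N, ε i * (if i ∈ ω j then 1 else 0) := by
          apply Finset.sum_congr rfl
          intro i _
          by_cases h : i ∈ ω j <;> simp [h]
      _ = 0 := hεsum j



section helpers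
variable {G : Type*} [AddCommGroup G]

lemma isKDissociated_anti {k j : ℕ} (h : j ≤ k) {Λ : Finset G}
    (hΛ : IsKDissociated k Λ) : IsKDissociated j Λ := by
  intro ε hb hs
  exact hΛ ε (fun x hx => le_trans (hb x hx) (by exact_mod_cast h)) hs

lemma isKDissociated_empty (k : ℕ) : IsKDissociated k (∅ : Finset G) := by
  intro ε _ _ x hx
  exact absurd hx (Finset.notMem_empty x)

lemma addDim_bddAbove (k : ℕ) (A : Finset G) :
    BddAbove {n : ℕ | ∃ Λ : Finset G, Λ ⊆ A ∧ Λ.card = n ∧ IsKDissociated k Λ} := by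
  refine ⟨A.card, fun n hn => ?_⟩
  obtain ⟨Λ, hΛ, hc, -⟩ := hn
  exact hc ▸ Finset.card_le_card hΛ

lemma addDim_nonempty (k : ℕ) (A : Finset G) :
    {n : ℕ | ∃ Λ : Finset G, Λ ⊆ A ∧ Λ.card = n ∧ IsKDissociated k Λ}.Nonempty :=
  ⟨0, ∅, Finset.empty_subset A, Finset.card_empty, isKDissociated_empty k⟩

lemma le_addDim {k : ℕ} {Λ A : Finset G} (hΛA : Λ ⊆ A) (hd : IsKDissociated k Λ) :
    Λ.card ≤ addDim k A :=
  le_csSup (addDim_bddAbove k A) ⟨Λ, hΛA, rfl, hd⟩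

lemma exists_addDim_witness (k : ℕ) (A : Finset G) :
    ∃ Λ : Finset G, Λ ⊆ A ∧ Λ.card = addDim k A ∧ IsKDissociated k Λ :=
  Nat.sSup_mem (addDim_nonempty k A) (addDim_bddAbove k A)

lemma addDim_le_card (k : ℕ) (A : Finset G) : addDim k A ≤ A.card := by
  apply csSup_le (addDim_nonempty k A)
  rintro n ⟨Λ, hΛ, hc, -⟩
  exact hc ▸ Finset.card_le_card hΛ

end helpers

section cubeupper
variable {G : Type*} [AddCommGroup G] [DecidableEq G]

lemma cube_card_le (Λ : Finset G) : (cube Λ).card ≤ 2 ^ Λ.card := by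
  calc (cube Λ).card ≤ Λ.powerset.card := Finset.card_image_le
    _ = 2 ^ Λ.card := Finset.card_powerset Λ

lemma cube_upper {Λ D : Finset G} (hD : D ⊆ cube Λ) (hdis : IsKDissociated 1 D) :
    2 ^ D.card ≤ (D.card + 1) ^ Λ.card := by
  classical
  set d := D.card
  -- choose representations
  have hrep : ∀ x : G, ∃ T : Finset G, x ∈ cube Λ → (T ⊆ Λ ∧ ∑ y ∈ T, y = x) := by
    intro x
    by_cases h : x ∈ cube Λ
    · rw [cube, Finset.mem_image] at h
      obtain ⟨T, hT, he⟩ := h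
      exact ⟨T, fun _ => ⟨Finset.mem_powerset.mp hT, he⟩⟩
    · exact ⟨∅, fun hx => absurd hx h⟩
  choose tx htx using hrep
  set B := (Λ.pi fun _ => Finset.range (d + 1)).image
    (fun c => ∑ y ∈ Λ.attach, (c y.1 y.2 : ℕ) • (y.1 : G)) with hB
  have hmaps : ∀ S ∈ D.powerset, ∑ x ∈ S, x ∈ B := by
    intro S hS
    rw [Finset.mem_powerset] at hS
    rw [hB, Finset.mem_image]
    refine ⟨fun y _ => (S.filter (fun x => y ∈ tx x)).card, ?_, ?_⟩
    · rw [Finset.mem_pi]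
      intro y hy
      rw [Finset.mem_range]
      have : (S.filter (fun x => y ∈ tx x)).card ≤ S.card := Finset.card_filter_le S _
      have hSD : S.card ≤ d := Finset.card_le_card hS
      omega
    · -- the sum identity
      have hcard : ∀ (y : G), (S.filter (fun x => y ∈ tx x)).card
          = ∑ x ∈ S, (if y ∈ tx x then (1:ℕ) else 0) := by
        intro y; rw [Finset.card_filter]
      calc ∑ y ∈ Λ.attach, ((S.filter (fun x => y.1 ∈ tx x)).card : ℕ) • (y.1 : G)
          = ∑ y ∈ Λ.attach, ∑ x ∈ S, (if y.1 ∈ tx x then (1:ℕ) else 0) • (y.1 : G) := by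
            apply Finset.sum_congr rfl
            intro y _
            rw [hcard, Finset.sum_smul]
        _ = ∑ x ∈ S, ∑ y ∈ Λ.attach, (if y.1 ∈ tx x then (1:ℕ) else 0) • (y.1 : G) :=
            Finset.sum_comm
        _ = ∑ x ∈ S, x := by
            apply Finset.sum_congr rfl
            intro x hxS
            have hxc : x ∈ cube Λ := hD (hS hxS)
            obtain ⟨hsub, hsum⟩ := htx x hxc
            calc ∑ y ∈ Λ.attach, (if y.1 ∈ tx x then (1:ℕ) else 0) • (y.1 : G)
                = ∑ y ∈ Λ, (if y ∈ tx x then (1:ℕ) else 0) • y :=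
                  Finset.sum_attach Λ (fun y => (if y ∈ tx x then (1:ℕ) else 0) • y)
              _ = ∑ y ∈ Λ, (if y ∈ tx x then y else 0) := by
                  apply Finset.sum_congr rfl
                  intro y _
                  by_cases h : y ∈ tx x <;> simp [h]
              _ = ∑ y ∈ Λ ∩ tx x, y := Finset.sum_ite_mem Λ (tx x) _
              _ = ∑ y ∈ tx x, y := by rw [Finset.inter_eq_right.mpr hsub]
              _ = x := hsum
  have hinj : Set.InjOn (fun S : Finset G => ∑ x ∈ S, x) D.powerset := by
    intro S hS T hT he
    rw [Finset.mem_coe, Finset.mem_powerset] at hS hT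
    simp only at he
    set ε : G → ℤ := fun x => (if x ∈ S then (1:ℤ) else 0) - (if x ∈ T then 1 else 0) with hε
    have hb : ∀ x ∈ D, |ε x| ≤ ((1:ℕ) : ℤ) := by
      intro x _
      rw [hε]
      by_cases h1 : x ∈ S <;> by_cases h2 : x ∈ T <;> simp [h1, h2]
    have e1 : ∀ U : Finset G, U ⊆ D →
        ∑ x ∈ D, ((if x ∈ U then (1:ℤ) else 0) • x) = ∑ x ∈ U, x := by
      intro U hU
      calc ∑ x ∈ D, ((if x ∈ U then (1:ℤ) else 0) • x) = ∑ x ∈ D, (if x ∈ U then x else 0) := by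
            apply Finset.sum_congr rfl
            intro x _
            by_cases h : x ∈ U <;> simp [h]
        _ = ∑ x ∈ D ∩ U, x := Finset.sum_ite_mem D U _
        _ = ∑ x ∈ U, x := by rw [Finset.inter_eq_right.mpr hU]
    have hsum : ∑ x ∈ D, ε x • x = 0 := by
      have hsplit : ∑ x ∈ D, ε x • x
          = ∑ x ∈ D, ((if x ∈ S then (1:ℤ) else 0) • x)
            - ∑ x ∈ D, ((if x ∈ T then (1:ℤ) else 0) • x) := by
        rw [← Finset.sum_sub_distrib]
        apply Finset.sum_congr rfl
        intro x _
        rw [hε, sub_smul]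
      rw [hsplit, e1 S hS, e1 T hT, he, sub_self]
    have hz := hdis ε hb hsum
    ext x
    by_cases hxD : x ∈ D
    · have hx := hz x hxD
      rw [hε] at hx
      by_cases h1 : x ∈ S <;> by_cases h2 : x ∈ T <;> simp [h1, h2] at hx ⊢
    · constructor
      · intro h; exact absurd (hS h) hxD
      · intro h; exact absurd (hT h) hxD
  calc 2 ^ d = D.powerset.card := (Finset.card_powerset D).symm
    _ ≤ B.card := Finset.card_le_card_of_injOn _ hmaps hinj
    _ ≤ (Λ.pi fun _ => Finset.range (d+1)).card := Finset.card_image_le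
    _ = (d+1) ^ Λ.card := by
        rw [Finset.card_pi]
        simp [Finset.prod_const, Finset.card_range]

end cubeupper

section transfer
variable {G : Type*} [AddCommGroup G] [DecidableEq G]

lemma transfer_lemma {Λ : Finset G} {k N : ℕ} (hΛ : IsKDissociated k Λ) (hNk : N ≤ k)
    (v : Fin N → Fin Λ.card → ℤ) (hv01 : ∀ i j, v i j = 0 ∨ v i j = 1)
    (hvd : ∀ ε : Fin N → ℤ, (∀ i, |ε i| ≤ 1) → (∀ j, ∑ i, ε i * v i j = 0) → ∀ i, ε i = 0) :
    ∃ D : Finset G, D ⊆ cube Λ ∧ D.card = N ∧ IsKDissociated 1 D := by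
  classical
  set κ : {x // x ∈ Λ} ≃ Fin Λ.card := Λ.equivFin with hκ
  set e : Fin Λ.card → G := fun j => (κ.symm j : G) with he
  have heΛ : ∀ j, e j ∈ Λ := fun j => (κ.symm j).2
  have heinj : Function.Injective e := by
    intro a b h
    have := κ.symm.injective (Subtype.ext h)
    exact this
  set g : Fin N → G := fun i => ∑ j, v i j • e j with hg
  have hkey : ∀ w : Fin Λ.card → ℤ, (∀ j, |w j| ≤ (k:ℤ)) →
      ∑ j, w j • e j = 0 → ∀ j, w j = 0 := by
    intro w hb hsum j
    set c : G → ℤ := fun x => if h : x ∈ Λ then w (κ ⟨x, h⟩) else 0 with hc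
    have hcb : ∀ x ∈ Λ, |c x| ≤ ((k:ℕ):ℤ) := by
      intro x hx
      rw [hc]
      simp only [dif_pos hx]
      exact hb _
    have hκe : ∀ (j : Fin Λ.card) (h : e j ∈ Λ), κ ⟨e j, h⟩ = j := by
      intro j h
      rw [show (⟨e j, h⟩ : {x // x ∈ Λ}) = κ.symm j from Subtype.ext rfl,
        Equiv.apply_symm_apply]
    have hce : ∀ j, c (e j) = w j := by
      intro j
      rw [hc]
      simp only [dif_pos (heΛ j)]
      exact congrArg w (hκe j (heΛ j))
    have hsum2 : ∑ x ∈ Λ, c x • x = 0 := by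
      rw [← Finset.sum_attach Λ (fun x => c x • x), ← Finset.univ_eq_attach, ← hsum]
      apply Fintype.sum_equiv κ (fun x => c ↑x • (↑x : G)) (fun j => w j • e j)
      intro x
      have h1 : c ↑x = w (κ x) := by
        rw [hc]
        simp only [dif_pos x.2, Subtype.coe_eta]
      have h2 : e (κ x) = ↑x := by
        rw [he]
        simp only [κ.symm_apply_apply]
      rw [h1, h2]
    have hz := hΛ c hcb hsum2
    rw [← hce j]
    exact hz (e j) (heΛ j)
  -- g i lands in the cube
  have hgc : ∀ i, g i ∈ cube Λ := by
    intro i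
    rw [cube, Finset.mem_image]
    refine ⟨(Finset.univ.filter fun j => v i j = 1).image e, ?_, ?_⟩
    · rw [Finset.mem_powerset]
      intro x hx
      rw [Finset.mem_image] at hx
      obtain ⟨j, -, rfl⟩ := hx
      exact heΛ j
    · rw [Finset.sum_image (fun a _ b _ h => heinj h), Finset.sum_filter]
      rw [hg]
      apply Finset.sum_congr rfl
      intro j _
      rcases hv01 i j with h | h <;> simp [h]
  -- g is injective
  have hginj : Function.Injective g := by
    intro i i' hgii
    by_contra hne
    have hveq : ∀ j, v i j = v i' j := by
      intro j
      have hw : ∀ j, |v i j - v i' j| ≤ (k:ℤ) := by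
        intro j
        rcases hv01 i j with h | h <;> rcases hv01 i' j with h' | h' <;>
          rw [h, h'] <;> simp <;> exact_mod_cast Nat.one_le_iff_ne_zero.mpr (by omega)
      have hs : ∑ j, (v i j - v i' j) • e j = 0 := by
        have : ∑ j, (v i j - v i' j) • e j = g i - g i' := by
          rw [hg]
          simp only
          rw [← Finset.sum_sub_distrib]
          apply Finset.sum_congr rfl
          intro j _
          rw [sub_smul]
        rw [this, hgii, sub_self]
      have := hkey _ hw hs j
      omega
    have hne' : ¬ i' = i := fun h => hne h.symm
    set ε : Fin N → ℤ := fun t => (if t = i then (1:ℤ) else 0) - (if t = i' then 1 else 0) with hεd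
    have h1 : ∀ t, |ε t| ≤ 1 := by
      intro t
      rw [hεd]
      by_cases h1 : t = i <;> by_cases h2 : t = i' <;> simp [h1, h2, hne, hne']
    have h2 : ∀ j, ∑ t, ε t * v t j = 0 := by
      intro j
      rw [hεd]
      have : ∀ t, ((if t = i then (1:ℤ) else 0) - (if t = i' then 1 else 0)) * v t j
          = (if t = i then v t j else 0) - (if t = i' then v t j else 0) := by
        intro t
        by_cases h1 : t = i <;> by_cases h2 : t = i' <;> simp [h1, h2, hne, hne'] <;> ring
      rw [Finset.sum_congr rfl (fun t _ => this t), Finset.sum_sub_distrib]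
      rw [Finset.sum_ite_eq' Finset.univ i (fun t => v t j),
        Finset.sum_ite_eq' Finset.univ i' (fun t => v t j)]
      simp [hveq j]
    have := hvd ε h1 h2 i
    rw [hεd] at this
    simp [hne] at this
  refine ⟨Finset.univ.image g, ?_, ?_, ?_⟩
  · intro x hx
    rw [Finset.mem_image] at hx
    obtain ⟨i, -, rfl⟩ := hx
    exact hgc i
  · rw [Finset.card_image_of_injective _ hginj, Finset.card_univ, Fintype.card_fin]
  · intro ε hεb hεs
    have hstep : ∀ i, ε (g i) = 0 := by
      have hw : ∀ j, |∑ i, ε (g i) * v i j| ≤ (k:ℤ) := by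
        intro j
        calc |∑ i, ε (g i) * v i j| ≤ ∑ i, |ε (g i) * v i j| :=
            Finset.abs_sum_le_sum_abs _ _
          _ ≤ ∑ _i : Fin N, 1 := by
              apply Finset.sum_le_sum
              intro i _
              rw [abs_mul]
              have hb1 : |ε (g i)| ≤ 1 := by
                have := hεb (g i) (Finset.mem_image_of_mem g (Finset.mem_univ i))
                exact_mod_cast this
              have hb2 : |v i j| ≤ 1 := by
                rcases hv01 i j with h | h <;> rw [h] <;> simp
              calc |ε (g i)| * |v i j| ≤ 1 * 1 :=
                  mul_le_mul hb1 hb2 (abs_nonneg _) zero_le_one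
                _ = 1 := by ring
          _ = (N : ℤ) := by simp
          _ ≤ (k : ℤ) := by exact_mod_cast hNk
      have hs : ∑ j, (∑ i, ε (g i) * v i j) • e j = 0 := by
        have e1 : ∑ x ∈ Finset.univ.image g, ε x • x = ∑ i, ε (g i) • g i :=
          Finset.sum_image (fun a _ b _ h => hginj h)
        have e2 : ∑ i, ε (g i) • g i = ∑ j, (∑ i, ε (g i) * v i j) • e j := by
          have hper : ∀ i, ε (g i) • g i = ∑ j, (ε (g i) * v i j) • e j := by
            intro i
            conv_lhs => rw [hg]
            simp only
            rw [Finset.smul_sum]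
            apply Finset.sum_congr rfl
            intro j _
            rw [smul_smul]
          rw [Finset.sum_congr rfl (fun i _ => hper i), Finset.sum_comm]
          apply Finset.sum_congr rfl
          intro j _
          rw [Finset.sum_smul]
        rw [← e2, ← e1, hεs]
      have hzero := hkey _ hw hs
      intro i
      have := hvd (fun i => ε (g i)) (fun i => by
        have := hεb (g i) (Finset.mem_image_of_mem g (Finset.mem_univ i))
        exact_mod_cast this) hzero
      exact this i
    intro x hx
    rw [Finset.mem_image] at hx
    obtain ⟨i, -, rfl⟩ := hx
    exact hstep i

end transfer



lemma sqrt_le_self_of_one_le {x : ℝ} (h : 1 ≤ x) : Real.sqrt x ≤ x := by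
  have h0 : (0:ℝ) ≤ x := by linarith
  calc Real.sqrt x ≤ Real.sqrt (x^2) := Real.sqrt_le_sqrt (by nlinarith)
    _ = x := Real.sqrt_sq h0

lemma logb_two_pow (j : ℕ) : Real.logb 2 ((2:ℝ)^j) = j := by
  rw [Real.logb_pow, Real.logb_self_eq_one (by norm_num)]
  ring

lemma logb_le_three_sqrt {x : ℝ} (hx : 1 ≤ x) : Real.logb 2 x ≤ 3 * Real.sqrt x := by
  have h0 : (0:ℝ) < x := by linarith
  have hs0 : (0:ℝ) < Real.sqrt x := Real.sqrt_pos.mpr h0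
  have hlog : Real.log x ≤ 2 * Real.sqrt x := by
    have h1 : Real.log (Real.sqrt x) ≤ Real.sqrt x - 1 := Real.log_le_sub_one_of_pos hs0
    have h2 : Real.log (Real.sqrt x) = Real.log x / 2 := Real.log_sqrt (le_of_lt h0)
    linarith
  have hl2 : (0.6931471803:ℝ) < Real.log 2 := Real.log_two_gt_d9
  rw [Real.logb, div_le_iff₀ (by linarith)]
  calc Real.log x ≤ 2 * Real.sqrt x := hlog
    _ ≤ (3 * Real.sqrt x) * 0.6931471803 := by nlinarith
    _ ≤ (3 * Real.sqrt x) * Real.log 2 := by nlinarith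

lemma nat_log_le_logb (n : ℕ) (hn : 1 ≤ n) : ((Nat.log 2 n : ℕ) : ℝ) ≤ Real.logb 2 n := by
  have h1 : (2:ℕ)^(Nat.log 2 n) ≤ n := Nat.pow_log_le_self 2 (by omega)
  have h2 : ((2:ℝ))^(Nat.log 2 n) ≤ (n:ℝ) := by exact_mod_cast h1
  calc ((Nat.log 2 n : ℕ) : ℝ) = Real.logb 2 ((2:ℝ)^(Nat.log 2 n)) := (logb_two_pow _).symm
    _ ≤ Real.logb 2 n := by
        apply (Real.logb_le_logb (by norm_num) (by positivity) (by exact_mod_cast hn)).mpr h2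

lemma logb_le_nat_log_succ (n : ℕ) (hn : 1 ≤ n) :
    Real.logb 2 n ≤ ((Nat.log 2 n : ℕ) : ℝ) + 1 := by
  have h1 : n < (2:ℕ)^(Nat.log 2 n + 1) := Nat.lt_pow_succ_log_self (by norm_num) n
  have h2 : (n:ℝ) ≤ ((2:ℝ))^(Nat.log 2 n + 1) := by exact_mod_cast le_of_lt h1
  calc Real.logb 2 n ≤ Real.logb 2 ((2:ℝ)^(Nat.log 2 n + 1)) := by
        apply (Real.logb_le_logb (by norm_num) (by exact_mod_cast hn) (by positivity)).mpr h2
    _ = ((Nat.log 2 n : ℕ) : ℝ) + 1 := by rw [logb_two_pow]; push_cast; ring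


set_option maxHeartbeats 2000000 in
theorem stmt6 :
    ∃ C : ℝ, 0 < C ∧
      ∀ (G : Type u) [AddCommGroup G] [DecidableEq G] (A : Finset G),
        4 ≤ addDim 1 A →
        ∀ k : ℕ, k = ⌈(addDim 1 A : ℝ) * Real.logb 2 (addDim 1 A)⌉₊ →
        ∀ Λk : Finset G, Λk ⊆ A → IsKDissociated k Λk → Λk.card = addDim k A →
        ∀ K : ℝ, 1 ≤ K →
          (((addDim 1 (cube Λk) : ℝ) ≤ K * addDim 1 A →
              (addDim k A : ℝ) ≤ C * K * addDim 1 A / Real.logb 2 (addDim 1 A)) ∧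
           ((addDim k A : ℝ) ≤ K * addDim 1 A / Real.logb 2 (addDim 1 A) →
              (addDim 1 (cube Λk) : ℝ) ≤ C * K * addDim 1 A)) := by
  refine ⟨2^50, by norm_num, ?_⟩
  intro G _ _ A hA4 k hk Λk hΛkA hΛkdis hΛkcard K hK
  set n := addDim 1 A with hn
  set L := Real.logb 2 n with hL
  have hnR : (4:ℝ) ≤ (n:ℝ) := by exact_mod_cast hA4
  have hL2 : (2:ℝ) ≤ L := by
    rw [hL]
    calc (2:ℝ) = Real.logb 2 ((2:ℝ)^(2:ℕ)) := by rw [logb_two_pow]; norm_num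
      _ ≤ Real.logb 2 n := by
          apply (Real.logb_le_logb (by norm_num) (by norm_num) (by linarith)).mpr
          norm_num
          linarith
  have hL0 : (0:ℝ) < L := by linarith
  have hk1 : 1 ≤ k := by
    rw [hk]
    have hx : (0:ℝ) < (n:ℝ) * Real.logb 2 n := by rw [← hL]; nlinarith
    exact Nat.ceil_pos.mpr hx
  have hΛk1dis : IsKDissociated 1 Λk := isKDissociated_anti hk1 hΛkdis
  set m := addDim k A with hm
  have hmn : m ≤ n := by
    have := le_addDim hΛkA hΛk1dis
    rw [hΛkcard] at this
    exact this
  have hmnR : (m:ℝ) ≤ (n:ℝ) := by exact_mod_cast hmn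
  set d := addDim 1 (cube Λk) with hd
  obtain ⟨D, hDsub, hDcard, hDdis⟩ := exists_addDim_witness 1 (cube Λk)
  have h2d : 2^d ≤ (d+1)^m := by
    have := cube_upper hDsub hDdis
    rw [hDcard, hΛkcard] at this
    exact this
  have hd2m : d ≤ 2^m := by
    calc d = D.card := hDcard.symm
      _ ≤ (cube Λk).card := Finset.card_le_card hDsub
      _ ≤ 2^Λk.card := cube_card_le Λk
      _ = 2^m := by rw [hΛkcard]
  constructor
  · -- part (i)
    intro hdK
    rw [le_div_iff₀ hL0]
    rcases lt_or_ge m (2^40) with hsmall | hbig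
    · -- m small
      have h1 : (m:ℝ) ≤ 2^40 := by exact_mod_cast le_of_lt hsmall
      have h2 : L ≤ 3 * Real.sqrt n := by rw [hL]; exact logb_le_three_sqrt (by linarith)
      have h3 : Real.sqrt (n:ℝ) ≤ (n:ℝ) := sqrt_le_self_of_one_le (by linarith)
      have hs0 : (0:ℝ) ≤ Real.sqrt (n:ℝ) := Real.sqrt_nonneg _
      have hm0 : (0:ℝ) ≤ (m:ℝ) := Nat.cast_nonneg m
      calc (m:ℝ) * L ≤ 2^40 * (3*(n:ℝ)) := by nlinarith
        _ ≤ 2^50 * K * n := by nlinarith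
    · rcases le_or_gt (m*m) n with hnm | hnm
      · -- n ≥ m^2
        have hmsq : (m:ℝ)*(m:ℝ) ≤ (n:ℝ) := by exact_mod_cast hnm
        have hm0 : (0:ℝ) ≤ (m:ℝ) := Nat.cast_nonneg m
        have h2 : (m:ℝ) ≤ Real.sqrt n := by
          rw [show (m:ℝ) = Real.sqrt ((m:ℝ)^2) from (Real.sqrt_sq hm0).symm]
          apply Real.sqrt_le_sqrt
          nlinarith
        have hLs : L ≤ 3 * Real.sqrt n := by rw [hL]; exact logb_le_three_sqrt (by linarith)
        have hs0 : (0:ℝ) ≤ Real.sqrt (n:ℝ) := Real.sqrt_nonneg _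
        have h4 : (m:ℝ)*L ≤ 3*((Real.sqrt (n:ℝ))*(Real.sqrt (n:ℝ))) := by nlinarith
        rw [Real.mul_self_sqrt (by linarith)] at h4
        nlinarith
      · -- n < m^2 : construction
        set ℓ := Nat.log 2 Λk.card with hℓdef
        set N := Λk.card * ℓ / 64 with hNdef
        have hbigc : 2^40 ≤ Λk.card := by rw [hΛkcard]; exact hbig
        have hm1 : 1 ≤ m := by omega
        have hℓm : ℓ = Nat.log 2 m := by rw [hℓdef, hΛkcard]
        have hNm : N = m * Nat.log 2 m / 64 := by rw [hNdef, hΛkcard, hℓm]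
        -- N ≤ k
        have hNk : N ≤ k := by
          have h1 : N ≤ m * Nat.log 2 m := by rw [hNm]; exact Nat.div_le_self _ _
          have h2 : m * Nat.log 2 m ≤ n * Nat.log 2 n :=
            Nat.mul_le_mul hmn (Nat.log_mono_right hmn)
          have h3 : ((n * Nat.log 2 n : ℕ):ℝ) ≤ (n:ℝ) * Real.logb 2 n := by
            push_cast
            have h5 := nat_log_le_logb n (by omega)
            nlinarith
          have h4 : (n:ℝ) * Real.logb 2 n ≤ ((k:ℕ):ℝ) := by
            rw [hk]
            exact Nat.le_ceil _
          have h6 : ((N:ℕ):ℝ) ≤ ((k:ℕ):ℝ) := by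
            calc ((N:ℕ):ℝ) ≤ ((n * Nat.log 2 n : ℕ):ℝ) := by exact_mod_cast le_trans h1 h2
              _ ≤ ((k:ℕ):ℝ) := le_trans h3 h4
          exact_mod_cast h6
        obtain ⟨v, hv01, hvd⟩ := exists_dissociated_vectors Λk.card hbigc
        obtain ⟨D', hD'sub, hD'card, hD'dis⟩ := transfer_lemma hΛkdis hNk v hv01 hvd
        have hNd : N ≤ d := by
          have := le_addDim hD'sub hD'dis
          rw [hD'card] at this
          exact this
        have hNdR : (N:ℝ) ≤ K * n := le_trans (by exact_mod_cast hNd) hdK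
        -- numeric chain
        have h64 : m * Nat.log 2 m ≤ 64 * N + 63 := by
          have hdm := Nat.div_add_mod (m * Nat.log 2 m) 64
          have hmod : (m * Nat.log 2 m) % 64 < 64 := Nat.mod_lt _ (by norm_num)
          omega
        have hlogm : Real.logb 2 (m:ℝ) ≤ ((Nat.log 2 m : ℕ):ℝ) + 1 :=
          logb_le_nat_log_succ m hm1
        have hLm : L ≤ 2 * Real.logb 2 (m:ℝ) := by
          have hcast : (n:ℝ) ≤ (m:ℝ)*(m:ℝ) := by exact_mod_cast le_of_lt hnm
          have h5 : Real.logb 2 (n:ℝ) ≤ Real.logb 2 ((m:ℝ)^(2:ℕ)) := by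
            apply (Real.logb_le_logb (by norm_num) (by linarith) (by positivity)).mpr
            nlinarith
          rw [Real.logb_pow] at h5
          rw [hL]
          push_cast at h5
          linarith
        have hmR0 : (0:ℝ) ≤ (m:ℝ) := Nat.cast_nonneg m
        have hlogm0 : (0:ℝ) ≤ Real.logb 2 (m:ℝ) := by
          apply Real.logb_nonneg (by norm_num)
          exact_mod_cast hm1
        have hchain : (m:ℝ) * Real.logb 2 (m:ℝ) ≤ 64*(N:ℝ) + 63 + m := by
          have c2 : (m:ℝ)*((Nat.log 2 m : ℕ):ℝ) ≤ 64*(N:ℝ) + 63 := by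
            have : ((m * Nat.log 2 m : ℕ):ℝ) ≤ ((64 * N + 63 : ℕ):ℝ) := by exact_mod_cast h64
            push_cast at this
            linarith
          nlinarith
        calc (m:ℝ)*L ≤ 2*((m:ℝ)*Real.logb 2 (m:ℝ)) := by nlinarith
          _ ≤ 2*(64*(N:ℝ) + 63 + m) := by linarith
          _ = 128*(N:ℝ) + 126 + 2*(m:ℝ) := by ring
          _ ≤ 128*(K*n) + 126 + 2*(n:ℝ) := by linarith
          _ ≤ 2^50 * K * n := by nlinarith
  · -- part (ii)
    intro hmK
    rcases le_or_gt m 1 with hm1 | hm2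
    · have hdle : d ≤ 2 := by
        calc d ≤ 2^m := hd2m
          _ ≤ 2^1 := Nat.pow_le_pow_right (by norm_num) hm1
          _ = 2 := by norm_num
      have : (d:ℝ) ≤ 2 := by exact_mod_cast hdle
      nlinarith
    · -- 2 ≤ m
      have hm2R : (2:ℝ) ≤ (m:ℝ) := by exact_mod_cast hm2
      have hcR : ((2:ℝ))^d ≤ ((d:ℝ)+1)^m := by
        have := h2d
        have hcast : (((2:ℕ)^d : ℕ):ℝ) ≤ (((d+1)^m : ℕ):ℝ) := by exact_mod_cast this
        push_cast at hcast
        exact_mod_cast hcast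
      have hd1 : (d:ℝ) ≤ (m:ℝ) * Real.logb 2 ((d:ℝ)+1) := by
        calc (d:ℝ) = Real.logb 2 ((2:ℝ)^d) := (logb_two_pow d).symm
          _ ≤ Real.logb 2 (((d:ℝ)+1)^m) := by
              apply (Real.logb_le_logb (by norm_num) (by positivity) (by positivity)).mpr hcR
          _ = (m:ℝ) * Real.logb 2 ((d:ℝ)+1) := Real.logb_pow _ _ _
      have hlogd0 : (0:ℝ) ≤ Real.logb 2 ((d:ℝ)+1) := by
        apply Real.logb_nonneg (by norm_num)
        have : (0:ℝ) ≤ (d:ℝ) := Nat.cast_nonneg d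
        linarith
      have hlog1 : Real.logb 2 ((d:ℝ)+1) ≤ (m:ℝ)+1 := by
        have hstep : (d:ℝ)+1 ≤ (2:ℝ)^(m+1) := by
          have hdc : (d:ℝ) ≤ (2:ℝ)^m := by
            have : ((d:ℕ):ℝ) ≤ (((2:ℕ)^m : ℕ):ℝ) := by exact_mod_cast hd2m
            push_cast at this
            exact_mod_cast this
          have h1 : (1:ℝ) ≤ (2:ℝ)^m := by
            calc (1:ℝ) = (2:ℝ)^(0:ℕ) := by norm_num
              _ ≤ (2:ℝ)^m := pow_le_pow_right₀ (by norm_num) (Nat.zero_le m)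
          calc (d:ℝ)+1 ≤ (2:ℝ)^m + (2:ℝ)^m := by linarith
            _ = (2:ℝ)^(m+1) := by rw [pow_succ]; ring
        calc Real.logb 2 ((d:ℝ)+1) ≤ Real.logb 2 ((2:ℝ)^(m+1)) := by
              apply (Real.logb_le_logb (by norm_num) (by positivity) (by positivity)).mpr hstep
          _ = ((m+1:ℕ):ℝ) := logb_two_pow (m+1)
          _ = (m:ℝ)+1 := by push_cast; ring
      have hdm2 : (d:ℝ) ≤ (m:ℝ)*((m:ℝ)+1) := by nlinarith
      have hlog2 : Real.logb 2 ((d:ℝ)+1) ≤ 4 * Real.logb 2 (m:ℝ) := by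
        have e1 : (d:ℝ)+1 ≤ 4*(m:ℝ)^2 := by nlinarith
        have e2 : Real.logb 2 ((d:ℝ)+1) ≤ Real.logb 2 (4*(m:ℝ)^2) := by
          apply (Real.logb_le_logb (by norm_num) (by positivity) (by positivity)).mpr e1
        have e3 : Real.logb 2 (4*(m:ℝ)^2) = 2 + 2*Real.logb 2 (m:ℝ) := by
          rw [Real.logb_mul (by norm_num) (by positivity), Real.logb_pow,
            show (4:ℝ) = (2:ℝ)^(2:ℕ) by norm_num, logb_two_pow]
          push_cast
          ring
        have e4 : (1:ℝ) ≤ Real.logb 2 (m:ℝ) := by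
          calc (1:ℝ) = Real.logb 2 ((2:ℝ)^(1:ℕ)) := by rw [logb_two_pow]; norm_num
            _ ≤ Real.logb 2 (m:ℝ) := by
                apply (Real.logb_le_logb (by norm_num) (by norm_num) (by linarith)).mpr
                norm_num
                exact_mod_cast hm2
        rw [e3] at e2
        linarith
      have hlogmn : Real.logb 2 (m:ℝ) ≤ L := by
        rw [hL]
        apply (Real.logb_le_logb (by norm_num) (by linarith) (by linarith)).mpr hmnR
      have hmL : (m:ℝ)*L ≤ K*(n:ℝ) := by
        rw [le_div_iff₀ hL0] at hmK
        exact hmK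
      have hlogm0 : (0:ℝ) ≤ Real.logb 2 (m:ℝ) := by linarith
      have hfin : (d:ℝ) ≤ 4*((m:ℝ)*L) := by nlinarith
      nlinarith
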